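/- For every positive real λ and every nonnegative integer m, ∫₀¹ z^(4m) cos(λ z²) dz = ((-1)^m Γ(2m+1/2) / (2 λ^(2m))) · ( √(2/λ) · C(√(2λ/π)) − cos(λ) Σ_{j=0}^{m-1} (−λ²)^j/Γ(2j+3/2) − λ sin(λ) Σ_{j=0}^{m-1} (−λ²)^j/Γ(2j+5/2) ). -/

import Mathlib

open Real Finset

noncomputable def fresnelC (x : ℝ) : ℝ := ∫ t in (0:ℝ)..x, Real.cos (π * t ^ 2 / 2)

lemma stmt11_base (lam : ℝ) (hlam : 0 < lam) :
    ∫ z in (0:ℝ)..1, Real.cos (lam * z ^ 2) =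
      (Real.sqrt π / 2) * (Real.sqrt (2 / lam) * fresnelC (Real.sqrt (2 * lam / π))) := by
  set u : ℝ := Real.sqrt (2 * lam / π) with hu
  have hu0 : 0 < u := Real.sqrt_pos.mpr (by positivity)
  have husq : u ^ 2 = 2 * lam / π := Real.sq_sqrt (by positivity)
  have h1 : ∫ z in (0:ℝ)..1, Real.cos (π * (u * z) ^ 2 / 2) =
      u⁻¹ • ∫ t in (0:ℝ)..u, Real.cos (π * t ^ 2 / 2) := by
    have := intervalIntegral.integral_comp_mul_left (fun t => Real.cos (π * t ^ 2 / 2))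
      (a := 0) (b := 1) (c := u)
    simp only [mul_one, mul_zero] at this
    exact this (ne_of_gt hu0)
  have h2 : ∀ z : ℝ, π * (u * z) ^ 2 / 2 = lam * z ^ 2 := by
    intro z
    have hπ : (0:ℝ) < π := Real.pi_pos
    rw [mul_pow, husq]
    field_simp
  simp only [h2] at h1
  have key : Real.sqrt π * Real.sqrt (2 / lam) * u = 2 := by
    rw [hu, ← Real.sqrt_mul Real.pi_pos.le, ← Real.sqrt_mul (by positivity)]
    have h4 : π * (2 / lam) * (2 * lam / π) = 4 := by
      field_simp
      ring
    rw [h4, show (4:ℝ) = 2^2 by norm_num, Real.sqrt_sq (by norm_num)]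
  have h5 : Real.sqrt π / 2 * Real.sqrt (2 / lam) = u⁻¹ := by
    rw [inv_eq_one_div, eq_div_iff (ne_of_gt hu0)]
    linear_combination key / 2
  rw [h1, smul_eq_mul]
  simp only [fresnelC]
  rw [← h5]
  ring

lemma stmt11_ftc (lam : ℝ) (hlam : 0 < lam) (n : ℕ) :
    (∫ z in (0:ℝ)..1, (z ^ (4*n+4) * Real.cos (lam * z^2)
      + ((4*n+3)*(4*n+1)/(4*lam^2)) * (z ^ (4*n) * Real.cos (lam * z^2))))
    = Real.sin lam / (2*lam) + (4*n+3) * Real.cos lam / (4*lam^2) := by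
  set F : ℝ → ℝ := fun z => z^(4*n+3) * Real.sin (lam*z^2) / (2*lam)
      + (4*n+3) * z^(4*n+1) * Real.cos (lam*z^2) / (4*lam^2) with hF
  have hderiv : ∀ x ∈ Set.uIcc (0:ℝ) 1, HasDerivAt F
      (x ^ (4*n+4) * Real.cos (lam * x^2)
        + ((4*n+3)*(4*n+1)/(4*lam^2)) * (x ^ (4*n) * Real.cos (lam * x^2))) x := by
    intro x _
    have hx2 : HasDerivAt (fun z : ℝ => lam * z^2) (lam * (2*x)) x := by
      simpa using ((hasDerivAt_pow 2 x).const_mul lam)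
    have hsin : HasDerivAt (fun z : ℝ => Real.sin (lam*z^2)) (Real.cos (lam*x^2) * (lam*(2*x))) x :=
      hx2.sin
    have hcos : HasDerivAt (fun z : ℝ => Real.cos (lam*z^2)) (-Real.sin (lam*x^2) * (lam*(2*x))) x :=
      hx2.cos
    have h1 : HasDerivAt (fun z : ℝ => z^(4*n+3) * Real.sin (lam*z^2) / (2*lam))
        (((4*n+3) * x^(4*n+2) * Real.sin (lam*x^2)
          + x^(4*n+3) * (Real.cos (lam*x^2) * (lam*(2*x)))) / (2*lam)) x := by
      exact (((hasDerivAt_pow (4*n+3) x).mul hsin).div_const (2*lam)).congr_deriv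
        (by push_cast; ring)
    have h2 : HasDerivAt (fun z : ℝ => (4*n+3) * z^(4*n+1) * Real.cos (lam*z^2) / (4*lam^2))
        (((4*n+3) * ((4*n+1) * x^(4*n)) * Real.cos (lam*x^2)
          + (4*n+3) * x^(4*n+1) * (-Real.sin (lam*x^2) * (lam*(2*x)))) / (4*lam^2)) x := by
      exact ((((hasDerivAt_pow (4*n+1) x).const_mul ((4:ℝ)*n+3)).mul hcos).div_const
        (4*lam^2)).congr_deriv (by push_cast; ring)
    have := h1.add h2
    refine this.congr_deriv ?_
    have hl : lam ≠ 0 := ne_of_gt hlam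
    field_simp
    ring
  rw [intervalIntegral.integral_eq_sub_of_hasDerivAt hderiv
    (by apply Continuous.intervalIntegrable; fun_prop)]
  simp only [hF]
  norm_num

lemma stmt11_rec (lam : ℝ) (hlam : 0 < lam) (n : ℕ) :
    (∫ z in (0:ℝ)..1, z ^ (4*n+4) * Real.cos (lam * z^2))
    = Real.sin lam / (2*lam) + (4*n+3) * Real.cos lam / (4*lam^2)
      - ((4*n+3)*(4*n+1)/(4*lam^2)) * ∫ z in (0:ℝ)..1, z ^ (4*n) * Real.cos (lam * z^2) := by
  have key := stmt11_ftc lam hlam n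
  have i1 : IntervalIntegrable (fun z : ℝ => z ^ (4*n+4) * Real.cos (lam * z^2))
      MeasureTheory.volume 0 1 := by
    apply Continuous.intervalIntegrable; fun_prop
  have i2 : IntervalIntegrable
      (fun z : ℝ => ((4*n+3)*(4*n+1)/(4*lam^2)) * (z ^ (4*n) * Real.cos (lam * z^2)))
      MeasureTheory.volume 0 1 := by
    apply Continuous.intervalIntegrable; fun_prop
  rw [intervalIntegral.integral_add i1 i2, intervalIntegral.integral_const_mul] at key
  linarith [key]

theorem stmt_11 (lam : ℝ) (hlam : 0 < lam) (m : ℕ) :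
    ∫ z in (0:ℝ)..1, z ^ (4 * m) * Real.cos (lam * z ^ 2) =
      ((-1 : ℝ) ^ m * Real.Gamma (2 * m + 1 / 2) / (2 * lam ^ (2 * m))) *
        (Real.sqrt (2 / lam) * fresnelC (Real.sqrt (2 * lam / π))
          - Real.cos lam * ∑ j ∈ Finset.range m, (-(lam ^ 2)) ^ j / Real.Gamma (2 * j + 3 / 2)
          - lam * Real.sin lam *
              ∑ j ∈ Finset.range m, (-(lam ^ 2)) ^ j / Real.Gamma (2 * j + 5 / 2)) := by
  have hl : lam ≠ 0 := ne_of_gt hlam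
  induction m with
  | zero =>
      simp only [Nat.mul_zero, pow_zero, Nat.cast_zero, mul_zero, zero_add,
        Finset.range_zero, Finset.sum_empty, one_mul, mul_zero, sub_zero]
      rw [Real.Gamma_one_half_eq, stmt11_base lam hlam]
      ring
  | succ n ih =>
      have hrec := stmt11_rec lam hlam n
      rw [show 4 * (n+1) = 4*n+4 from by ring, hrec, ih]
      set G : ℝ := Real.Gamma (2 * n + 1/2) with hG
      have hGpos : 0 < G := Real.Gamma_pos_of_pos (by positivity)
      have hG1 : Real.Gamma (2 * n + 3/2) = (2 * n + 1/2) * G := by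
        have h := Real.Gamma_add_one (s := 2 * (n:ℝ) + 1/2) (by positivity)
        rw [show (2 * (n:ℝ) + 1/2) + 1 = 2 * n + 3/2 by ring] at h
        rw [h, hG]
      have hG2 : Real.Gamma (2 * n + 5/2) = (2 * n + 3/2) * ((2 * n + 1/2) * G) := by
        have h := Real.Gamma_add_one (s := 2 * (n:ℝ) + 3/2) (by positivity)
        rw [show (2 * (n:ℝ) + 3/2) + 1 = 2 * n + 5/2 by ring] at h
        rw [h, hG1]
      have hcast : ((n:ℝ) + 1) = (((n+1 : ℕ)):ℝ) := by push_cast; ring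
      push_cast
      rw [Finset.sum_range_succ, Finset.sum_range_succ]
      rw [show 2 * ((n:ℝ) + 1) + 1/2 = 2 * n + 5/2 by ring, hG2, hG1]
      set S : ℝ := Real.sqrt (2 / lam) * fresnelC (Real.sqrt (2 * lam / π)) with hS
      set S1 : ℝ := ∑ j ∈ Finset.range n, (-(lam ^ 2)) ^ j / Real.Gamma (2 * j + 3/2) with hS1
      set S2 : ℝ := ∑ j ∈ Finset.range n, (-(lam ^ 2)) ^ j / Real.Gamma (2 * j + 5/2) with hS2
      have h1 : (2 * (n:ℝ) + 1/2) ≠ 0 := by positivity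
      have h3 : (2 * (n:ℝ) + 3/2) ≠ 0 := by positivity
      have hGne : G ≠ 0 := ne_of_gt hGpos
      have hpow : lam ^ (2 * n) ≠ 0 := pow_ne_zero _ hl
      have hpm : ((-1:ℝ)) ^ (n*2) = 1 := by
        rw [mul_comm, pow_mul]; norm_num
      field_simp
      ring_nf
      simp only [hpm]
      ring
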